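/- Regard T(z,λ) as an M×M matrix with entries in the ring of Laurent polynomials ℝ[λ,λ⁻¹], and define P(z,λ) = Σ_{k=1}^{M} (z_k + z_{k−1} + ⋯ + z_{k−m+1}) E_{kk} + λ^m Σ_{k=1}^{M} E_{k+m,k} (indices mod M). Then every entry of the matrix T(z,λ)^m − P(z,λ) is a Laurent polynomial in λ all of whose coefficients at λ^p with p ≥ 0 vanish. In other words, P equals the sum of the nonnegative λ-degree parts of T^m, i.e. P = (P_+ + P_0)(T^m) in the grading by powers of λ. -/

import Mathlib

open Matrix LaurentPolynomial
open Fin.NatCast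

/-- The periodic Bogoyavlensky Lax matrix
`T(z,λ) = λ^{1−m} Σ_k z_k E_{k,k+m−1} + λ Σ_k E_{k+1,k}` (indices mod M),
as an M×M matrix over the Laurent polynomial ring `ℝ[λ,λ⁻¹]`. -/
noncomputable def TmatL (m M : ℕ) [NeZero M] (z : Fin M → ℝ) :
    Matrix (Fin M) (Fin M) (LaurentPolynomial ℝ) :=
  (∑ k : Fin M, Matrix.single k (k + ((m - 1 : ℕ) : Fin M))
      (LaurentPolynomial.C (z k) * LaurentPolynomial.T (1 - (m : ℤ))))
  + ∑ k : Fin M, Matrix.single (k + 1) k (LaurentPolynomial.T 1)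

/-- `P(z,λ) = Σ_k (z_k + z_{k−1} + ⋯ + z_{k−m+1}) E_{kk} + λ^m Σ_k E_{k+m,k}`
(indices mod M), over `ℝ[λ,λ⁻¹]`. -/
noncomputable def PmatL (m M : ℕ) [NeZero M] (z : Fin M → ℝ) :
    Matrix (Fin M) (Fin M) (LaurentPolynomial ℝ) :=
  (∑ k : Fin M, Matrix.single k k
      (LaurentPolynomial.C (∑ l ∈ Finset.range m, z (k - (l : Fin M)))))
  + ∑ k : Fin M, Matrix.single (k + (m : Fin M)) k (LaurentPolynomial.T (m : ℤ))


/-- Shifted "diagonal" matrix `Σ_k E_{k+d,k} (h k)`. -/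
noncomputable def Dmat {M : ℕ} [NeZero M] (d : Fin M) (h : Fin M → LaurentPolynomial ℝ) :
    Matrix (Fin M) (Fin M) (LaurentPolynomial ℝ) :=
  ∑ k : Fin M, Matrix.single (k + d) k (h k)

lemma Dmat_apply {M : ℕ} [NeZero M] (d : Fin M) (h : Fin M → LaurentPolynomial ℝ)
    (i j : Fin M) : Dmat d h i j = if i = j + d then h j else 0 := by
  unfold Dmat
  rw [Matrix.sum_apply, Finset.sum_eq_single j]
  · show (if j + d = i ∧ j = j then h j else 0) = _
    by_cases hij : i = j + d
    · rw [if_pos ⟨hij.symm, rfl⟩, if_pos hij]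
    · rw [if_neg (fun hc => hij hc.1.symm), if_neg hij]
  · intro k _ hk
    show (if k + d = i ∧ k = j then h k else 0) = 0
    exact if_neg (fun hc => hk hc.2)
  · simp

open Fin.CommRing in
lemma Dmat_mul {M : ℕ} [NeZero M] (d e : Fin M) (h h' : Fin M → LaurentPolynomial ℝ) :
    Dmat d h * Dmat e h' = Dmat (d + e) (fun k => h (k + e) * h' k) := by
  ext i j : 2
  rw [Matrix.mul_apply]
  simp only [Dmat_apply]
  rw [Finset.sum_eq_single (j + e)]
  · rw [if_pos rfl]
    have hjed : j + (d + e) = j + e + d := by ring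
    rw [hjed]
    by_cases hij : i = j + e + d
    · rw [if_pos hij, if_pos hij]
    · rw [if_neg hij, if_neg hij, zero_mul]
  · intro k _ hk; rw [if_neg hk, mul_zero]
  · simp

lemma Dmat_sum {M : ℕ} [NeZero M] (d : Fin M) (s : Finset ℕ)
    (h : ℕ → Fin M → LaurentPolynomial ℝ) :
    ∑ j ∈ s, Dmat d (h j) = Dmat d (fun k => ∑ j ∈ s, h j k) := by
  ext i j' : 2
  rw [Matrix.sum_apply]
  simp only [Dmat_apply]
  by_cases hij : i = j' + d
  · simp [hij]
  · simp [hij]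

lemma Dmat_one {M : ℕ} [NeZero M] : Dmat (0 : Fin M) (fun _ => (1 : LaurentPolynomial ℝ)) = 1 := by
  ext i j : 2
  rw [Dmat_apply, Matrix.one_apply, add_zero]

/-- "all coefficients at exponents `> d` vanish". -/
def LBdd {M : ℕ} [NeZero M] (X : Matrix (Fin M) (Fin M) (LaurentPolynomial ℝ)) (d : ℤ) : Prop :=
  ∀ i j : Fin M, ∀ p : ℤ, d < p → (X i j).coeff p = 0

lemma coeff_mul_bdd (f g : LaurentPolynomial ℝ) (d e p : ℤ)
    (hf : ∀ a, d < a → f.coeff a = 0) (hg : ∀ b, e < b → g.coeff b = 0) (hp : d + e < p) :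
    (f * g).coeff p = 0 := by
  rw [AddMonoidAlgebra.coeff_mul, Finsupp.sum]
  apply Finset.sum_eq_zero
  intro a ha
  rw [Finsupp.sum]
  apply Finset.sum_eq_zero
  intro b hb
  have ha' : a ≤ d := by
    by_contra hc; exact (Finsupp.mem_support_iff.mp ha) (hf a (lt_of_not_ge hc))
  have hb' : b ≤ e := by
    by_contra hc; exact (Finsupp.mem_support_iff.mp hb) (hg b (lt_of_not_ge hc))
  rw [if_neg (by omega)]

lemma LBdd_mul {M : ℕ} [NeZero M] {X Y : Matrix (Fin M) (Fin M) (LaurentPolynomial ℝ)}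
    {d e : ℤ} (hX : LBdd X d) (hY : LBdd Y e) : LBdd (X * Y) (d + e) := by
  intro i j p hp
  rw [Matrix.mul_apply, AddMonoidAlgebra.coeff_sum, Finset.sum_apply']
  apply Finset.sum_eq_zero
  intro k _
  exact coeff_mul_bdd _ _ d e p (hX i k) (hY k j) hp

lemma LBdd_mono {M : ℕ} [NeZero M] {X : Matrix (Fin M) (Fin M) (LaurentPolynomial ℝ)}
    {d e : ℤ} (hde : d ≤ e) (hX : LBdd X d) : LBdd X e :=
  fun i j p hp => hX i j p (lt_of_le_of_lt hde hp)

lemma LBdd_add {M : ℕ} [NeZero M] {X Y : Matrix (Fin M) (Fin M) (LaurentPolynomial ℝ)}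
    {d : ℤ} (hX : LBdd X d) (hY : LBdd Y d) : LBdd (X + Y) d := by
  intro i j p hp
  rw [Matrix.add_apply, AddMonoidAlgebra.coeff_add, Finsupp.add_apply, hX i j p hp, hY i j p hp, add_zero]

lemma LBdd_sum {M : ℕ} [NeZero M] {s : Finset ℕ}
    {F : ℕ → Matrix (Fin M) (Fin M) (LaurentPolynomial ℝ)} {d : ℤ}
    (h : ∀ n ∈ s, LBdd (F n) d) : LBdd (∑ n ∈ s, F n) d := by
  intro i j p hp
  rw [Matrix.sum_apply, AddMonoidAlgebra.coeff_sum, Finset.sum_apply']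
  exact Finset.sum_eq_zero fun n hn => h n hn i j p hp

lemma LBdd_Dmat {M : ℕ} [NeZero M] (d : Fin M) (h : Fin M → LaurentPolynomial ℝ) {e : ℤ}
    (hh : ∀ k : Fin M, ∀ p : ℤ, e < p → (h k).coeff p = 0) : LBdd (Dmat d h) e := by
  intro i j p hp
  rw [Dmat_apply]
  by_cases hij : i = j + d
  · rw [if_pos hij]; exact hh j p hp
  · rw [if_neg hij]; rfl

lemma coeff_CmulT (r : ℝ) (n p : ℤ) :
    (LaurentPolynomial.C r * LaurentPolynomial.T n : LaurentPolynomial ℝ).coeff p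
      = if n = p then r else 0 := by
  rw [← LaurentPolynomial.single_eq_C_mul_T, AddMonoidAlgebra.coeff_single, Finsupp.single_apply]

lemma Dmat_congr {M : ℕ} [NeZero M] {d e : Fin M} {h h' : Fin M → LaurentPolynomial ℝ}
    (h1 : d = e) (h2 : h = h') : Dmat d h = Dmat e h' := by rw [h1, h2]

/-- The `A` part of the Lax matrix, in `Dmat` normal form. -/
noncomputable def Amat (m M : ℕ) [NeZero M] (z : Fin M → ℝ) :
    Matrix (Fin M) (Fin M) (LaurentPolynomial ℝ) :=
  Dmat (-(((m - 1 : ℕ) : Fin M)))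
    (fun k => LaurentPolynomial.C (z (k - ((m - 1 : ℕ) : Fin M))) * LaurentPolynomial.T (1 - (m : ℤ)))

/-- The `B` part of the Lax matrix. -/
noncomputable def Bmat (M : ℕ) [NeZero M] : Matrix (Fin M) (Fin M) (LaurentPolynomial ℝ) :=
  Dmat (1 : Fin M) (fun _ => LaurentPolynomial.T 1)

lemma TmatL_eq (m M : ℕ) [NeZero M] (z : Fin M → ℝ) :
    TmatL m M z = Amat m M z + Bmat M := by
  unfold TmatL Amat Bmat Dmat
  congr 1
  apply Fintype.sum_equiv (Equiv.addRight ((m - 1 : ℕ) : Fin M))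
  intro k
  simp only [Equiv.coe_addRight]
  rw [add_neg_cancel_right, add_sub_cancel_right]

open Fin.CommRing in
lemma Bmat_pow (M : ℕ) [NeZero M] (n : ℕ) :
    (Bmat M) ^ n = Dmat ((n : Fin M)) (fun _ => LaurentPolynomial.T (n : ℤ)) := by
  induction n with
  | zero =>
    rw [pow_zero, Nat.cast_zero, Nat.cast_zero, LaurentPolynomial.T_zero, Dmat_one]
  | succ n ih =>
    rw [pow_succ, ih]
    unfold Bmat
    rw [Dmat_mul]
    apply Dmat_congr
    · push_cast; ring
    · funext k
      rw [← LaurentPolynomial.T_add]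
      push_cast
      ring_nf

open Fin.CommRing in
lemma BAB (m M : ℕ) [NeZero M] (z : Fin M → ℝ) (j : ℕ) (hj : j < m) :
    (Bmat M) ^ j * Amat m M z * (Bmat M) ^ (m - 1 - j)
      = Dmat 0 (fun k => LaurentPolynomial.C (z (k - (j : Fin M)))) := by
  rw [Bmat_pow, Bmat_pow]
  unfold Amat
  rw [Dmat_mul, Dmat_mul]
  have hc : ((m - 1 - j : ℕ) : Fin M) = ((m - 1 : ℕ) : Fin M) - (j : Fin M) := by
    rw [Nat.cast_sub (by omega)]
  apply Dmat_congr
  · rw [hc]; ring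
  · funext k
    have hidx : (k + ((m - 1 - j : ℕ) : Fin M)) - ((m - 1 : ℕ) : Fin M) = k - (j : Fin M) := by
      rw [hc]; ring
    rw [hidx]
    rw [show (LaurentPolynomial.T (j : ℤ) *
          (LaurentPolynomial.C (z (k - (j : Fin M))) * LaurentPolynomial.T (1 - (m : ℤ))) *
          LaurentPolynomial.T ((m - 1 - j : ℕ) : ℤ))
        = LaurentPolynomial.C (z (k - (j : Fin M))) *
          (LaurentPolynomial.T (j : ℤ) * LaurentPolynomial.T (1 - (m : ℤ)) *
            LaurentPolynomial.T ((m - 1 - j : ℕ) : ℤ)) from by ring]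
    rw [← LaurentPolynomial.T_add, ← LaurentPolynomial.T_add,
      show (j : ℤ) + (1 - (m : ℤ)) + ((m - 1 - j : ℕ) : ℤ) = 0 from by omega,
      LaurentPolynomial.T_zero, mul_one]

/-- `S_n = Σ_{j<n} B^j A B^{n-1-j}`. -/
noncomputable def Smat (m M : ℕ) [NeZero M] (z : Fin M → ℝ) (n : ℕ) :
    Matrix (Fin M) (Fin M) (LaurentPolynomial ℝ) :=
  ∑ j ∈ Finset.range n, (Bmat M) ^ j * Amat m M z * (Bmat M) ^ (n - 1 - j)

lemma Smat_succ (m M : ℕ) [NeZero M] (z : Fin M → ℝ) (n : ℕ) :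
    Smat m M z (n + 1) = (Bmat M) ^ n * Amat m M z + Smat m M z n * Bmat M := by
  unfold Smat
  rw [Finset.sum_range_succ, Finset.sum_mul,
    show n + 1 - 1 - n = 0 from by omega, pow_zero, mul_one, add_comm]
  refine congrArg ((Bmat M) ^ n * Amat m M z + ·) ?_
  apply Finset.sum_congr rfl
  intro j hj
  have hj' : j < n := Finset.mem_range.mp hj
  rw [mul_assoc (Bmat M ^ j * Amat m M z) (Bmat M ^ (n - 1 - j)) (Bmat M),
    ← pow_succ, show n - 1 - j + 1 = n + 1 - 1 - j from by omega]

lemma R_bdd (m M : ℕ) [NeZero M] (z : Fin M → ℝ) (hm : 2 ≤ m) (n : ℕ) :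
    LBdd (TmatL m M z ^ n - (Bmat M) ^ n - Smat m M z n) ((n : ℤ) - 2 * m) := by
  have hA : LBdd (Amat m M z) (1 - m) :=
    LBdd_Dmat _ _ (fun k p hp => by rw [coeff_CmulT, if_neg (by omega)])
  have hB : LBdd (Bmat M) 1 :=
    LBdd_Dmat _ _ (fun k p hp => by rw [LaurentPolynomial.T_apply, if_neg (by omega)])
  have hT : LBdd (TmatL m M z) 1 := by
    rw [TmatL_eq]; exact LBdd_add (LBdd_mono (by omega) hA) hB
  have hBn : ∀ r : ℕ, LBdd ((Bmat M) ^ r) (r : ℤ) := fun r => by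
    rw [Bmat_pow]
    exact LBdd_Dmat _ _ (fun k p hp => by rw [LaurentPolynomial.T_apply, if_neg (by omega)])
  induction n with
  | zero =>
    intro i j p _
    simp only [pow_zero, Smat, Finset.range_zero, Finset.sum_empty, sub_zero, sub_self,
      Matrix.zero_apply]
    rfl
  | succ n ih =>
    have hS : LBdd (Smat m M z n) ((n : ℤ) - m) := by
      apply LBdd_sum
      intro j hj
      have hj' : j < n := Finset.mem_range.mp hj
      have h := LBdd_mul (LBdd_mul (hBn j) hA) (hBn (n - 1 - j))
      exact LBdd_mono (by omega) h
    have key : TmatL m M z ^ (n + 1) - (Bmat M) ^ (n + 1) - Smat m M z (n + 1)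
        = Smat m M z n * Amat m M z
          + (TmatL m M z ^ n - (Bmat M) ^ n - Smat m M z n) * TmatL m M z := by
      rw [Smat_succ, pow_succ (TmatL m M z), pow_succ (Bmat M), TmatL_eq]
      noncomm_ring
    rw [key]
    have h1 := LBdd_mul hS hA
    have h2 := LBdd_mul ih hT
    exact LBdd_add (LBdd_mono (by push_cast; omega) h1) (LBdd_mono (by push_cast; omega) h2)

lemma PmatL_eq (m M : ℕ) [NeZero M] (z : Fin M → ℝ) (hm : 2 ≤ m) :
    PmatL m M z = (Bmat M) ^ m + Smat m M z m := by
  have h1 : (∑ k : Fin M, Matrix.single k k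
        (LaurentPolynomial.C (∑ l ∈ Finset.range m, z (k - (l : Fin M)))))
      = Dmat 0 (fun k => LaurentPolynomial.C (∑ l ∈ Finset.range m, z (k - (l : Fin M)))) := by
    unfold Dmat
    apply Finset.sum_congr rfl
    intro k _
    rw [add_zero]
  have h2 : Smat m M z m
      = Dmat (0 : Fin M) (fun k => LaurentPolynomial.C (∑ l ∈ Finset.range m, z (k - (l : Fin M)))) := by
    unfold Smat
    rw [Finset.sum_congr rfl (fun j hj => BAB m M z j (Finset.mem_range.mp hj)), Dmat_sum]
    apply Dmat_congr rfl
    funext k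
    rw [map_sum]
  unfold PmatL
  rw [h1, h2, Bmat_pow, add_comm]
  rfl

theorem statement14 (m N M : ℕ) (hm : 2 ≤ m) (hN : 2 ≤ N) (hM : M = m * N) [NeZero M]
    (z : Fin M → ℝ) :
    ∀ (i j : Fin M) (p : ℤ), 0 ≤ p →
      (AddMonoidAlgebra.coeff ((TmatL m M z ^ m - PmatL m M z) i j)) p = 0 := by
  intro i j p hp
  have hr := R_bdd m M z hm m
  have hfinal : TmatL m M z ^ m - PmatL m M z
      = TmatL m M z ^ m - (Bmat M) ^ m - Smat m M z m := by
    rw [PmatL_eq m M z hm]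
    noncomm_ring
  rw [hfinal]
  exact hr i j p (by omega)
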